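/- For a positive integer y set ỹ = y/2 if y is even and ỹ = y if y is odd. Let T⁰ be the set of positive non-square integers d for which there exist integers y ≥ 1, x with 0 ≤ x < y and gcd(x, y) = 1, and a > ỹ with |(a·y + x)² − d·y²| = 1; let T¹ be the set of positive non-square integers d ≡ 1 (mod 4) for which there exist such y, x and a > ỹ with |(2(a·y + x) − y)² − d·y²| = 4. Then lim_{X→∞} #{d ≤ X : d squarefree, d ∈ T⁰} / #{d ≤ X : d squarefree} = 0, and lim_{X→∞} #{d ≤ X : d squarefree, d ≡ 1 (mod 4), d ∈ T¹} / #{d ≤ X : d squarefree, d ≡ 1 (mod 4)} = 0. In particular, almost all squarefree d > 1 (in relative density among squarefree integers) are the least element of their attached quadratic progression, i.e. almost all real quadratic fields ℚ(√d) are of the least type. -/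

import Mathlib

open Finset

/-- `ỹ = y/2` if `y` is even, `ỹ = y` if `y` is odd. -/
def ytilde (y : ℕ) : ℕ := if Even y then y / 2 else y

/-- `T⁰`: positive non-square integers `d` admitting a Pell-type solution
`|(a y + x)² - d y²| = 1` with `0 ≤ x < y` coprime and `a > ỹ`. -/
def T0 : Set ℕ :=
  {d : ℕ | 0 < d ∧ ¬ IsSquare d ∧ ∃ y x a : ℕ, 1 ≤ y ∧ x < y ∧ Nat.Coprime x y ∧
    ytilde y < a ∧ |((a * y + x : ℕ) : ℤ) ^ 2 - (d : ℤ) * (y : ℤ) ^ 2| = 1}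

/-- `T¹`: positive non-square integers `d ≡ 1 (mod 4)` admitting a Pell-type solution
`|(2(a y + x) - y)² - d y²| = 4` with `0 ≤ x < y` coprime and `a > ỹ`. -/
def T1 : Set ℕ :=
  {d : ℕ | 0 < d ∧ ¬ IsSquare d ∧ d % 4 = 1 ∧ ∃ y x a : ℕ, 1 ≤ y ∧ x < y ∧ Nat.Coprime x y ∧
    ytilde y < a ∧ |(2 * ((a * y + x : ℕ) : ℤ) - (y : ℤ)) ^ 2 - (d : ℤ) * (y : ℤ) ^ 2| = 4}


lemma spacing_card {L B : ℕ} (hL : 0 < L) (s : Finset ℕ) (hs : s ⊆ Finset.Ioc 0 B)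
    (h : ∀ a ∈ s, ∀ b ∈ s, (L : ℤ) ∣ (a : ℤ) - (b : ℤ)) : s.card ≤ B / L + 1 := by
  rcases s.eq_empty_or_nonempty with rfl | hne
  · simp
  have hmin := s.min'_mem hne
  set m := s.min' hne with hm
  have key : ∀ t ∈ s, t = m + L * ((t - m) / L) ∧ (t - m) / L ≤ B / L := by
    intro t ht
    have hmt : m ≤ t := s.min'_le t ht
    have hdvd : (L : ℤ) ∣ (t : ℤ) - (m : ℤ) := h t ht m hmin
    have hdvd' : L ∣ t - m := by
      have h2 : ((L : ℕ) : ℤ) ∣ ((t - m : ℕ) : ℤ) := by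
        rw [Nat.cast_sub hmt]; exact hdvd
      exact_mod_cast h2
    have htB : t ≤ B := (Finset.mem_Ioc.mp (hs ht)).2
    constructor
    · have e : L * ((t - m) / L) = t - m := Nat.mul_div_cancel' hdvd'
      rw [e]; omega
    · exact Nat.div_le_div_right (by omega)
  have hcard : s.card ≤ (Finset.range (B / L + 1)).card := by
    apply Finset.card_le_card_of_injOn (fun t => (t - m) / L)
    · intro t ht
      simp only [Finset.mem_range]
      exact Finset.mem_coe.mpr (Finset.mem_range.mpr (Nat.lt_succ_of_le (key t ht).2))
    · intro a ha b hb hab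
      simp only at hab
      exact ((key a ha).1).trans (by rw [hab, ← (key b hb).1])
  simpa using hcard

lemma card_cong_le (m B : ℕ) (hm : 0 < m) (ε : ℤ) (hε : ε ∣ 4) :
    ((Finset.Ioc 0 B).filter (fun t : ℕ => (m : ℤ) ∣ (t : ℤ) ^ 2 - ε)).card
      ≤ m.divisors.card * (8 * B / m + 1) := by
  classical
  set s := (Finset.Ioc 0 B).filter (fun t : ℕ => (m : ℤ) ∣ (t : ℤ) ^ 2 - ε) with hsdef
  rcases s.eq_empty_or_nonempty with he | hne
  · rw [he]; simp
  obtain ⟨t₀, ht₀⟩ := hne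
  have ht₀dvd : (m : ℤ) ∣ (t₀ : ℤ) ^ 2 - ε := (Finset.mem_filter.mp ht₀).2
  have hmaps : ∀ t ∈ s, Int.gcd ((t : ℤ) - (t₀ : ℤ)) (m : ℤ) ∈ m.divisors := by
    intro t ht
    refine Nat.mem_divisors.mpr ⟨?_, hm.ne'⟩
    have h2 := Int.gcd_dvd_right (a := (t : ℤ) - (t₀ : ℤ)) (b := (m : ℤ))
    exact_mod_cast h2
  rw [Finset.card_eq_sum_card_fiberwise hmaps]
  have hbound : ∀ g ∈ m.divisors,
      (s.filter (fun t : ℕ => Int.gcd ((t : ℤ) - (t₀ : ℤ)) (m : ℤ) = g)).card ≤ 8 * B / m + 1 := by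
    intro g hg
    set F := s.filter (fun t : ℕ => Int.gcd ((t : ℤ) - (t₀ : ℤ)) (m : ℤ) = g) with hF
    rcases F.eq_empty_or_nonempty with heF | ⟨a₀, ha₀⟩
    · rw [heF]; simp
    have hg0 : 0 < g := Nat.pos_of_mem_divisors hg
    have hgm : g ∣ m := (Nat.mem_divisors.mp hg).1
    set q := m / g with hqdef
    have hq0 : 0 < q := Nat.div_pos (Nat.le_of_dvd hm hgm) hg0
    have hgh : g * q = m := Nat.mul_div_cancel' hgm
    have hfiber : ∀ t ∈ F, (g : ℤ) ∣ (t : ℤ) - (t₀ : ℤ) ∧ (q : ℤ) ∣ (t : ℤ) + (t₀ : ℤ) := by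
      intro t ht
      obtain ⟨hts, htg⟩ := Finset.mem_filter.mp ht
      have hgdvd : (g : ℤ) ∣ (t : ℤ) - (t₀ : ℤ) := by
        rw [← htg]; exact Int.gcd_dvd_left _ _
      refine ⟨hgdvd, ?_⟩
      have htdvd : (m : ℤ) ∣ (t : ℤ) ^ 2 - ε := (Finset.mem_filter.mp hts).2
      have hmul : (m : ℤ) ∣ ((t : ℤ) - (t₀ : ℤ)) * ((t : ℤ) + (t₀ : ℤ)) := by
        have hd := dvd_sub htdvd ht₀dvd
        have e : (t : ℤ) ^ 2 - ε - ((t₀ : ℤ) ^ 2 - ε)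
            = ((t : ℤ) - (t₀ : ℤ)) * ((t : ℤ) + (t₀ : ℤ)) := by ring
        rwa [e] at hd
      have hgcd : Int.gcd ((t : ℤ) - (t₀ : ℤ)) (m : ℤ) = g := htg
      have hcop : Int.gcd (((t : ℤ) - (t₀ : ℤ)) / g) ((m : ℤ) / g) = 1 := by
        have h3 := Int.gcd_div_gcd_div_gcd (i := (t : ℤ) - (t₀ : ℤ)) (j := (m : ℤ))
          (by rw [hgcd]; exact_mod_cast hg0)
        rwa [hgcd] at h3
      have hmq : (m : ℤ) / (g : ℤ) = (q : ℤ) := by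
        have hgq : ((g : ℤ)) * (q : ℤ) = (m : ℤ) := by exact_mod_cast hgh
        rw [← hgq, Int.mul_ediv_cancel_left _ (by exact_mod_cast hg0.ne' : (g : ℤ) ≠ 0)]
      rw [hmq] at hcop
      have hcop' : IsCoprime ((q : ℤ)) (((t : ℤ) - (t₀ : ℤ)) / g) :=
        Int.isCoprime_iff_gcd_eq_one.mpr (by rw [Int.gcd_comm]; exact hcop)
      have hA : (g : ℤ) * (((t : ℤ) - (t₀ : ℤ)) / g) = (t : ℤ) - (t₀ : ℤ) :=
        Int.mul_ediv_cancel' hgdvd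
      have hqd : (q : ℤ) ∣ (((t : ℤ) - (t₀ : ℤ)) / g) * ((t : ℤ) + (t₀ : ℤ)) := by
        have h4 : (g : ℤ) * (q : ℤ) ∣ (g : ℤ) * ((((t : ℤ) - (t₀ : ℤ)) / g) * ((t : ℤ) + (t₀ : ℤ))) := by
          rw [← mul_assoc, hA]
          exact_mod_cast (by exact_mod_cast hgh : ((g * q : ℕ) : ℤ) = (m : ℤ)) ▸ hmul
        exact (mul_dvd_mul_iff_left (by exact_mod_cast hg0.ne' : (g : ℤ) ≠ 0)).mp h4
      exact hcop'.dvd_of_dvd_mul_left hqd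
    set L := Nat.lcm g q with hL
    have hL0 : 0 < L := Nat.lcm_pos hg0 hq0
    have hFsub : F ⊆ Finset.Ioc 0 B :=
      (Finset.filter_subset _ s).trans (Finset.filter_subset _ _)
    have hdiff : ∀ a ∈ F, ∀ b ∈ F, (L : ℤ) ∣ (a : ℤ) - (b : ℤ) := by
      intro a ha b hb
      obtain ⟨hag, haq⟩ := hfiber a ha
      obtain ⟨hbg, hbq⟩ := hfiber b hb
      have h5 : (g : ℤ) ∣ (a : ℤ) - (b : ℤ) := by
        have := dvd_sub hag hbg; simpa using this
      have h6 : (q : ℤ) ∣ (a : ℤ) - (b : ℤ) := by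
        have := dvd_sub haq hbq; simpa using this
      have h7 : ((Int.lcm (g : ℤ) (q : ℤ) : ℕ) : ℤ) ∣ (a : ℤ) - (b : ℤ) := by
        rw [Int.coe_lcm]; exact lcm_dvd h5 h6
      have h8 : Int.lcm (g : ℤ) (q : ℤ) = L := by simp [Int.lcm, hL]
      rwa [h8] at h7
    have hcard := spacing_card hL0 F hFsub hdiff
    refine hcard.trans ?_
    have hm8L : m ≤ 8 * L := by
      set c := Nat.gcd g q with hc
      have hcL : c * L = m := by rw [hc, hL, Nat.gcd_mul_lcm, hgh]
      have hc8 : (c : ℤ) ∣ 8 := by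
        obtain ⟨hag, haq⟩ := hfiber a₀ ha₀
        have hcg : (c : ℤ) ∣ (g : ℤ) := by exact_mod_cast Nat.gcd_dvd_left g q
        have hcq : (c : ℤ) ∣ (q : ℤ) := by exact_mod_cast Nat.gcd_dvd_right g q
        have h2t : (c : ℤ) ∣ 2 * (t₀ : ℤ) := by
          have := dvd_sub (hcq.trans haq) (hcg.trans hag)
          have e : (a₀ : ℤ) + (t₀ : ℤ) - ((a₀ : ℤ) - (t₀ : ℤ)) = 2 * (t₀ : ℤ) := by ring
          rwa [e] at this
        have hcm : (c : ℤ) ∣ (m : ℤ) := by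
          exact_mod_cast (Nat.gcd_dvd_left g q).trans hgm
        have h2e : (c : ℤ) ∣ 2 * ε := by
          have ha' : (c : ℤ) ∣ 2 * (t₀ : ℤ) ^ 2 := by
            have := h2t.mul_right (t₀ : ℤ)
            have e : 2 * (t₀ : ℤ) * (t₀ : ℤ) = 2 * (t₀ : ℤ) ^ 2 := by ring
            rwa [e] at this
          have hb' : (c : ℤ) ∣ 2 * ((t₀ : ℤ) ^ 2 - ε) := (hcm.trans ht₀dvd).mul_left 2
          have := dvd_sub ha' hb'
          have e : 2 * (t₀ : ℤ) ^ 2 - 2 * ((t₀ : ℤ) ^ 2 - ε) = 2 * ε := by ring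
          rwa [e] at this
        exact h2e.trans (mul_dvd_mul_left 2 hε)
      have hc8' : c ∣ 8 := by exact_mod_cast hc8
      have : c ≤ 8 := Nat.le_of_dvd (by norm_num) hc8'
      calc m = c * L := hcL.symm
        _ ≤ 8 * L := Nat.mul_le_mul_right L this
    have e1 : B / L = 8 * B / (8 * L) := (Nat.mul_div_mul_left B L (by norm_num)).symm
    have e2 : 8 * B / (8 * L) ≤ 8 * B / m := Nat.div_le_div_left hm8L hm
    omega
  calc ∑ g ∈ m.divisors, (s.filter (fun t : ℕ => Int.gcd ((t : ℤ) - (t₀ : ℤ)) (m : ℤ) = g)).card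
      ≤ ∑ _g ∈ m.divisors, (8 * B / m + 1) := Finset.sum_le_sum hbound
    _ = m.divisors.card * (8 * B / m + 1) := by rw [Finset.sum_const, smul_eq_mul]


lemma card_divisors_le_two_sqrt (n : ℕ) : n.divisors.card ≤ 2 * Nat.sqrt n := by
  rcases Nat.eq_zero_or_pos n with rfl | hn
  · simp
  classical
  have hmaps : ∀ d ∈ n.divisors, min d (n / d) ∈ Finset.Icc 1 (Nat.sqrt n) := by
    intro d hd
    obtain ⟨hdvd, hne⟩ := Nat.mem_divisors.mp hd
    have hd0 : 0 < d := Nat.pos_of_dvd_of_pos hdvd hn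
    have hnd0 : 0 < n / d := Nat.div_pos (Nat.le_of_dvd hn hdvd) hd0
    have hprod : d * (n / d) = n := Nat.mul_div_cancel' hdvd
    simp only [Finset.mem_Icc]
    constructor
    · omega
    · rcases le_total d (n / d) with h | h
      · have h2 : d * d ≤ n := by nlinarith
        have := Nat.le_sqrt.mpr h2
        omega
      · have h2 : (n / d) * (n / d) ≤ n := by nlinarith
        have := Nat.le_sqrt.mpr h2
        omega
  rw [Finset.card_eq_sum_card_fiberwise hmaps]
  have hfib : ∀ b ∈ Finset.Icc 1 (Nat.sqrt n),
      (n.divisors.filter (fun d => min d (n / d) = b)).card ≤ 2 := by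
    intro b hb
    have hsub : n.divisors.filter (fun d => min d (n / d) = b) ⊆ {b, n / b} := by
      intro d hd
      obtain ⟨hdm, hmin⟩ := Finset.mem_filter.mp hd
      obtain ⟨hdvd, hne⟩ := Nat.mem_divisors.mp hdm
      rcases min_cases d (n / d) with ⟨h1, _⟩ | ⟨h1, _⟩ <;> rw [h1] at hmin
      · simp [hmin]
      · have h4 : n / b = d := by rw [← hmin]; exact Nat.div_div_self hdvd hn.ne'
        simp [Finset.mem_insert, ← h4]
    calc (n.divisors.filter (fun d => min d (n / d) = b)).card
        ≤ ({b, n / b} : Finset ℕ).card := Finset.card_le_card hsub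
      _ ≤ 2 := by
          refine (Finset.card_insert_le _ _).trans ?_
          simp
  calc ∑ b ∈ Finset.Icc 1 (Nat.sqrt n), (n.divisors.filter (fun d => min d (n / d) = b)).card
      ≤ ∑ _b ∈ Finset.Icc 1 (Nat.sqrt n), 2 := Finset.sum_le_sum hfib
    _ = 2 * Nat.sqrt n := by
        rw [Finset.sum_const, smul_eq_mul, Nat.card_Icc]
        omega

lemma card_divisors_sq_le (n : ℕ) : (n ^ 2).divisors.card ≤ n.divisors.card ^ 2 := by
  rcases Nat.eq_zero_or_pos n with rfl | hn
  · simp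
  classical
  have hstep : (n ^ 2).divisors.card ≤ (n.divisors ×ˢ n.divisors).card := by
    apply Finset.card_le_card_of_injOn (fun d => (Nat.gcd d n, d / Nat.gcd d n))
    · intro d hd
      obtain ⟨hdvd, -⟩ := Nat.mem_divisors.mp hd
      have hg0 : 0 < Nat.gcd d n := Nat.gcd_pos_of_pos_right d hn
      have h1 : Nat.gcd d n ∣ n := Nat.gcd_dvd_right d n
      have hcop : Nat.Coprime (d / Nat.gcd d n) (n / Nat.gcd d n) :=
        Nat.coprime_div_gcd_div_gcd hg0
      have h2 : d / Nat.gcd d n ∣ (n / Nat.gcd d n) * n := by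
        have e : Nat.gcd d n * (d / Nat.gcd d n) = d :=
          Nat.mul_div_cancel' (Nat.gcd_dvd_left d n)
        have e2 : Nat.gcd d n * ((n / Nat.gcd d n) * n) = n ^ 2 := by
          rw [← mul_assoc, Nat.mul_div_cancel' h1, pow_two]
        have hdn : Nat.gcd d n * (d / Nat.gcd d n) ∣ Nat.gcd d n * ((n / Nat.gcd d n) * n) := by
          rw [e, e2]; exact hdvd
        exact (Nat.mul_dvd_mul_iff_left hg0).mp hdn
      have h3 : d / Nat.gcd d n ∣ n := hcop.dvd_of_dvd_mul_left h2
      exact Finset.mem_product.mpr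
        ⟨Nat.mem_divisors.mpr ⟨h1, hn.ne'⟩, Nat.mem_divisors.mpr ⟨h3, hn.ne'⟩⟩
    · intro a ha b hb hab
      simp only [Prod.mk.injEq] at hab
      have ea : Nat.gcd a n * (a / Nat.gcd a n) = a := Nat.mul_div_cancel' (Nat.gcd_dvd_left a n)
      have eb : Nat.gcd b n * (b / Nat.gcd b n) = b := Nat.mul_div_cancel' (Nat.gcd_dvd_left b n)
      rw [← ea, ← eb, hab.2, hab.1]
  simpa [Finset.card_product, pow_two] using hstep

lemma sum_tau_weighted (n : ℕ) (w : ℕ → ℝ) :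
    ∑ y ∈ Finset.Icc 1 n, (y.divisors.card : ℝ) * w y
      = ∑ d ∈ Finset.Icc 1 n, ∑ k ∈ Finset.Icc 1 (n / d), w (d * k) := by
  classical
  have step1 : ∀ y ∈ Finset.Icc 1 n,
      (y.divisors.card : ℝ) * w y = ∑ d ∈ Finset.Icc 1 n, if d ∣ y then w y else 0 := by
    intro y hy
    obtain ⟨hy1, hyn⟩ := Finset.mem_Icc.mp hy
    have hdiv : y.divisors = (Finset.Icc 1 n).filter (fun d => d ∣ y) := by
      ext d
      simp only [Nat.mem_divisors, Finset.mem_filter, Finset.mem_Icc]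
      constructor
      · rintro ⟨hd, -⟩
        exact ⟨⟨Nat.pos_of_dvd_of_pos hd (by omega), (Nat.le_of_dvd (by omega) hd).trans hyn⟩, hd⟩
      · rintro ⟨-, hd⟩; exact ⟨hd, by omega⟩
    rw [← Finset.sum_filter, ← hdiv, Finset.sum_const, nsmul_eq_mul]
  rw [Finset.sum_congr rfl step1, Finset.sum_comm]
  apply Finset.sum_congr rfl
  intro d hd
  obtain ⟨hd1, hdn⟩ := Finset.mem_Icc.mp hd
  rw [← Finset.sum_filter]
  have himg : (Finset.Icc 1 n).filter (fun y => d ∣ y)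
      = (Finset.Icc 1 (n / d)).image (fun k => d * k) := by
    ext y
    simp only [Finset.mem_filter, Finset.mem_image, Finset.mem_Icc]
    constructor
    · rintro ⟨⟨hy1, hyn⟩, hdy⟩
      refine ⟨y / d, ⟨?_, Nat.div_le_div_right hyn⟩, Nat.mul_div_cancel' hdy⟩
      exact (Nat.one_le_div_iff (by omega)).mpr (Nat.le_of_dvd (by omega) hdy)
    · rintro ⟨k, ⟨hk1, hk2⟩, rfl⟩
      refine ⟨⟨Nat.mul_pos (by omega) (by omega), ?_⟩, dvd_mul_right d k⟩
      have h5 := (Nat.le_div_iff_mul_le (by omega : 0 < d)).mp hk2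
      have h6 : d * k = k * d := mul_comm d k
      omega
  rw [himg, Finset.sum_image (by intro a _ b _ hab; exact Nat.eq_of_mul_eq_mul_left (by omega) hab)]

lemma log_nat_nonneg (n : ℕ) : 0 ≤ Real.log n := by
  rcases Nat.eq_zero_or_pos n with rfl | h
  · simp
  · exact Real.log_nonneg (by exact_mod_cast h)

lemma sum_one_div_le_log (n : ℕ) : ∑ d ∈ Finset.Icc 1 n, (1 : ℝ) / d ≤ 1 + Real.log n := by
  induction n with
  | zero => simp
  | succ n ih =>
    rcases Nat.eq_zero_or_pos n with rfl | hn
    · simp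
    rw [Finset.sum_Icc_succ_top (by omega)]
    have hn0 : (0 : ℝ) < n := by exact_mod_cast hn
    have h1 : Real.log ((n : ℝ) / ((n : ℝ) + 1)) ≤ (n : ℝ) / ((n : ℝ) + 1) - 1 :=
      Real.log_le_sub_one_of_pos (by positivity)
    rw [Real.log_div (by positivity) (by positivity)] at h1
    have h2 : (n : ℝ) / ((n : ℝ) + 1) - 1 = -(1 / ((n : ℝ) + 1)) := by field_simp; ring
    rw [h2] at h1
    push_cast
    push_cast at ih
    linarith

lemma sum_one_div_sqrt_le (n : ℕ) :
    ∑ k ∈ Finset.Icc 1 n, (1 : ℝ) / Real.sqrt k ≤ 2 * Real.sqrt n := by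
  induction n with
  | zero => simp
  | succ n ih =>
    rw [Finset.sum_Icc_succ_top (by omega)]
    have ha := Real.sq_sqrt (by positivity : (0 : ℝ) ≤ (n : ℝ))
    have hb := Real.sq_sqrt (by positivity : (0 : ℝ) ≤ (n : ℝ) + 1)
    have ha0 := Real.sqrt_nonneg (n : ℝ)
    have hb0 : 0 < Real.sqrt ((n : ℝ) + 1) := Real.sqrt_pos.mpr (by positivity)
    have h3 : ((n + 1 : ℕ) : ℝ) = (n : ℝ) + 1 := by push_cast; ring
    rw [h3]
    have key : 1 / Real.sqrt ((n : ℝ) + 1) ≤ 2 * Real.sqrt ((n : ℝ) + 1) - 2 * Real.sqrt n := by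
      rw [div_le_iff₀ hb0]
      nlinarith [sq_nonneg (Real.sqrt ((n : ℝ) + 1) - Real.sqrt n)]
    linarith

lemma sum_tau_div_sqrt_le (n : ℕ) :
    ∑ y ∈ Finset.Icc 1 n, (y.divisors.card : ℝ) * (1 / Real.sqrt y)
      ≤ 2 * Real.sqrt n * (1 + Real.log n) := by
  rw [sum_tau_weighted n (fun y => 1 / Real.sqrt y)]
  have hmain : ∀ d ∈ Finset.Icc 1 n,
      ∑ k ∈ Finset.Icc 1 (n / d), 1 / Real.sqrt ((d * k : ℕ) : ℝ)
        ≤ (2 * Real.sqrt n) * (1 / (d : ℝ)) := by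
    intro d hd
    obtain ⟨hd1, hdn⟩ := Finset.mem_Icc.mp hd
    have hd0 : (0 : ℝ) < d := by exact_mod_cast hd1
    have hsd0 : 0 < Real.sqrt d := Real.sqrt_pos.mpr hd0
    have hsd : Real.sqrt d * Real.sqrt d = (d : ℝ) := Real.mul_self_sqrt hd0.le
    have step : ∀ k ∈ Finset.Icc 1 (n / d),
        (1 : ℝ) / Real.sqrt ((d * k : ℕ) : ℝ) = (1 / Real.sqrt d) * (1 / Real.sqrt k) := by
      intro k hk
      push_cast
      rw [Real.sqrt_mul hd0.le, one_div, mul_inv, one_div, one_div]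
    rw [Finset.sum_congr rfl step, ← Finset.mul_sum]
    have h1 : ∑ k ∈ Finset.Icc 1 (n / d), (1 : ℝ) / Real.sqrt k
        ≤ 2 * Real.sqrt ((n / d : ℕ) : ℝ) := sum_one_div_sqrt_le _
    have h2 : Real.sqrt ((n / d : ℕ) : ℝ) ≤ Real.sqrt n / Real.sqrt d := by
      rw [← Real.sqrt_div (by positivity) (d : ℝ)]
      exact Real.sqrt_le_sqrt (Nat.cast_div_le)
    calc (1 / Real.sqrt d) * ∑ k ∈ Finset.Icc 1 (n / d), (1 : ℝ) / Real.sqrt k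
        ≤ (1 / Real.sqrt d) * (2 * (Real.sqrt n / Real.sqrt d)) := by
          apply mul_le_mul_of_nonneg_left _ (by positivity)
          linarith
      _ = 2 * Real.sqrt n * (1 / (Real.sqrt d * Real.sqrt d)) := by ring
      _ = 2 * Real.sqrt n * (1 / (d : ℝ)) := by rw [hsd]
  calc ∑ d ∈ Finset.Icc 1 n, ∑ k ∈ Finset.Icc 1 (n / d), 1 / Real.sqrt ((d * k : ℕ) : ℝ)
      ≤ ∑ d ∈ Finset.Icc 1 n, (2 * Real.sqrt n) * (1 / (d : ℝ)) := Finset.sum_le_sum hmain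
    _ = (2 * Real.sqrt n) * ∑ d ∈ Finset.Icc 1 n, 1 / (d : ℝ) := by rw [← Finset.mul_sum]
    _ ≤ 2 * Real.sqrt n * (1 + Real.log n) := by
        apply mul_le_mul_of_nonneg_left (sum_one_div_le_log n) (by positivity)

lemma sum_sqrt_tau_le (n : ℕ) :
    ∑ y ∈ Finset.Icc 1 n, (y.divisors.card : ℝ) * Real.sqrt y
      ≤ Real.sqrt n * ((n : ℝ) * (1 + Real.log n)) := by
  rw [sum_tau_weighted n (fun y => Real.sqrt y)]
  have hmain : ∀ d ∈ Finset.Icc 1 n,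
      ∑ k ∈ Finset.Icc 1 (n / d), Real.sqrt ((d * k : ℕ) : ℝ)
        ≤ (Real.sqrt n * (n : ℝ)) * (1 / (d : ℝ)) := by
    intro d hd
    obtain ⟨hd1, hdn⟩ := Finset.mem_Icc.mp hd
    have step : ∀ k ∈ Finset.Icc 1 (n / d), Real.sqrt ((d * k : ℕ) : ℝ) ≤ Real.sqrt n := by
      intro k hk
      apply Real.sqrt_le_sqrt
      have hk2 := (Finset.mem_Icc.mp hk).2
      have h5 := (Nat.le_div_iff_mul_le (by omega : 0 < d)).mp hk2
      have h6 : d * k = k * d := mul_comm d k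
      exact_mod_cast (by omega : d * k ≤ n)
    calc ∑ k ∈ Finset.Icc 1 (n / d), Real.sqrt ((d * k : ℕ) : ℝ)
        ≤ ∑ _k ∈ Finset.Icc 1 (n / d), Real.sqrt n := Finset.sum_le_sum step
      _ = ((n / d : ℕ) : ℝ) * Real.sqrt n := by
          rw [Finset.sum_const, nsmul_eq_mul, Nat.card_Icc]
          norm_num
      _ ≤ ((n : ℝ) / (d : ℝ)) * Real.sqrt n :=
          mul_le_mul_of_nonneg_right Nat.cast_div_le (Real.sqrt_nonneg _)
      _ = (Real.sqrt n * (n : ℝ)) * (1 / (d : ℝ)) := by ring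
  calc ∑ d ∈ Finset.Icc 1 n, ∑ k ∈ Finset.Icc 1 (n / d), Real.sqrt ((d * k : ℕ) : ℝ)
      ≤ ∑ d ∈ Finset.Icc 1 n, (Real.sqrt n * (n : ℝ)) * (1 / (d : ℝ)) := Finset.sum_le_sum hmain
    _ = (Real.sqrt n * (n : ℝ)) * ∑ d ∈ Finset.Icc 1 n, 1 / (d : ℝ) := by rw [← Finset.mul_sum]
    _ ≤ (Real.sqrt n * (n : ℝ)) * (1 + Real.log n) := by
        apply mul_le_mul_of_nonneg_left (sum_one_div_le_log n) (by positivity)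
    _ = Real.sqrt n * ((n : ℝ) * (1 + Real.log n)) := by ring

lemma tau_real_le (y : ℕ) : ((y.divisors.card : ℝ)) ≤ 2 * Real.sqrt y := by
  have h1 := card_divisors_le_two_sqrt y
  have h2 : ((Nat.sqrt y : ℕ) : ℝ) ≤ Real.sqrt y := by
    have hsq : ((Nat.sqrt y : ℕ) : ℝ) ^ 2 ≤ (y : ℝ) := by
      exact_mod_cast Nat.sqrt_le' y
    have e : ((Nat.sqrt y : ℕ) : ℝ) = Real.sqrt (((Nat.sqrt y : ℕ) : ℝ) ^ 2) :=
      (Real.sqrt_sq (by positivity)).symm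
    rw [e]
    exact Real.sqrt_le_sqrt hsq
  calc ((y.divisors.card : ℝ)) ≤ ((2 * Nat.sqrt y : ℕ) : ℝ) := by exact_mod_cast h1
    _ = 2 * ((Nat.sqrt y : ℕ) : ℝ) := by push_cast; ring
    _ ≤ 2 * Real.sqrt y := by linarith

lemma sum_inv_sq_aux (n : ℕ) (hn : 1 ≤ n) :
    ∑ k ∈ Finset.Icc 2 n, (1 : ℝ) / (k ^ 2)
      ≤ 3 / 4 - (1 / 2) * (1 / (n : ℝ) + 1 / ((n : ℝ) + 1)) := by
  induction n with
  | zero => omega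
  | succ n ih =>
    rcases Nat.eq_zero_or_pos n with rfl | hn0
    · rw [Finset.Icc_eq_empty (by omega)]
      push_cast
      norm_num
      try linarith
    have ihh := ih hn0
    rw [Finset.sum_Icc_succ_top (by omega)]
    have hn0' : (0 : ℝ) < n := by exact_mod_cast hn0
    have key : 1 / ((n : ℝ) + 1) ^ 2 ≤ (1 / 2) * (1 / (n : ℝ) - 1 / ((n : ℝ) + 2)) := by
      have e : (1 / 2) * (1 / (n : ℝ) - 1 / ((n : ℝ) + 2)) = 1 / ((n : ℝ) * ((n : ℝ) + 2)) := by
        field_simp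
        try ring
      rw [e]
      apply one_div_le_one_div_of_le (by positivity)
      nlinarith
    push_cast
    push_cast at ihh
    have e2 : ((n : ℝ) + 1 + 1) = (n : ℝ) + 2 := by ring
    rw [e2]
    linarith

lemma sum_inv_sq_le (n : ℕ) :
    ∑ k ∈ Finset.Icc 2 n, (1 : ℝ) / (k ^ 2) ≤ 3 / 4 := by
  rcases Nat.lt_or_ge n 1 with h | h
  · rw [Finset.Icc_eq_empty (by omega)]
    norm_num
  have := sum_inv_sq_aux n h
  have h1 : (0 : ℝ) ≤ 1 / (n : ℝ) := by positivity
  have h2 : (0 : ℝ) ≤ 1 / ((n : ℝ) + 1) := by positivity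
  linarith

lemma sum_inv_sq_ge3_le (n : ℕ) :
    ∑ k ∈ Finset.Icc 3 n, (1 : ℝ) / (k ^ 2) ≤ 1 / 2 := by
  rcases Nat.lt_or_ge n 3 with h | h
  · rw [Finset.Icc_eq_empty (by omega)]
    norm_num
  have hins : Finset.Icc 2 n = insert 2 (Finset.Icc 3 n) := by
    ext k
    simp only [Finset.mem_Icc, Finset.mem_insert]
    omega
  have h2 := sum_inv_sq_le n
  rw [hins, Finset.sum_insert (by simp)] at h2
  norm_num at h2
  simp only [one_div] at h2 ⊢
  linarith

lemma card_multiples_le (X m : ℕ) (hm : 0 < m) :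
    ((Finset.Icc 1 X).filter (fun d => m ∣ d)).card ≤ X / m := by
  have hstep : ((Finset.Icc 1 X).filter (fun d => m ∣ d)).card ≤ (Finset.Icc 1 (X / m)).card := by
    apply Finset.card_le_card_of_injOn (fun d => d / m)
    · intro d hd
      obtain ⟨hd', hdvd⟩ := Finset.mem_filter.mp hd
      obtain ⟨h1, h2⟩ := Finset.mem_Icc.mp hd'
      simp only [Finset.mem_Icc]
      exact Finset.mem_coe.mpr (Finset.mem_Icc.mpr ⟨(Nat.one_le_div_iff hm).mpr (Nat.le_of_dvd (by omega) hdvd),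
        Nat.div_le_div_right h2⟩)
    · intro a ha b hb hab
      simp only [Finset.coe_filter, Set.mem_setOf_eq] at ha hb
      have ea : m * (a / m) = a := Nat.mul_div_cancel' ha.2
      have eb : m * (b / m) = b := Nat.mul_div_cancel' hb.2
      simp only at hab
      rw [← ea, ← eb, hab]
  simpa using hstep


noncomputable def Scong (Q y : ℕ) (ε : ℤ) : Finset ℕ :=
  (Finset.Ioc 0 (y * (Q + 3))).filter (fun t : ℕ => ((y ^ 2 : ℕ) : ℤ) ∣ (t : ℤ) ^ 2 - ε)

noncomputable def bigG (X : ℕ) : Finset ℕ :=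
  ({1, -1, 4, -4} : Finset ℤ).biUnion fun ε =>
    ((Finset.Icc 1 (2 * Nat.sqrt X + 4)).biUnion fun y =>
        ({y} : Finset ℕ) ×ˢ Scong (Nat.sqrt X) y ε).image
      fun p => ((p.2 : ℤ) ^ 2 - ε).toNat / p.1 ^ 2

lemma mem_bigG {X d y t : ℕ} {ε : ℤ} (hε : ε ∈ ({1, -1, 4, -4} : Finset ℤ))
    (hy : 1 ≤ y) (ht0 : 0 < t) (hlow : y ^ 2 + 2 * y ≤ 2 * t)
    (heq : (t : ℤ) ^ 2 - ε = (d : ℤ) * (y : ℤ) ^ 2) (hdX : d ≤ X) : d ∈ bigG X := by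
  classical
  set Q := Nat.sqrt X with hQ
  have habs : ε = 1 ∨ ε = -1 ∨ ε = 4 ∨ ε = -4 := by
    simpa using hε
  have hε4 : ε ≤ 4 ∧ -4 ≤ ε := by rcases habs with rfl | rfl | rfl | rfl <;> norm_num
  have ht2n : t ^ 2 ≤ d * y ^ 2 + 4 := by
    have hc : ((t ^ 2 : ℕ) : ℤ) ≤ ((d * y ^ 2 + 4 : ℕ) : ℤ) := by push_cast; linarith [hε4.1]
    exact_mod_cast hc
  have hX1 : X < (Q + 1) * (Q + 1) := by
    simpa [hQ, Nat.succ_eq_add_one] using Nat.lt_succ_sqrt X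
  have hdy : d * y ^ 2 ≤ X * y ^ 2 := Nat.mul_le_mul_right _ hdX
  have hX2 : X ≤ Q * Q + 2 * Q := by nlinarith [hX1]
  have hXy : X * y ^ 2 ≤ (Q * Q + 2 * Q) * y ^ 2 := Nat.mul_le_mul_right _ hX2
  have hy2 : 1 ≤ y ^ 2 := Nat.one_le_pow 2 y (by omega)
  have h1 : t ^ 2 ≤ (y * (Q + 3)) ^ 2 := by nlinarith [hdy, hXy, ht2n, hy2]
  have htB : t ≤ y * (Q + 3) := (Nat.pow_le_pow_iff_left (by norm_num : (2:ℕ) ≠ 0)).mp h1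
  have hyY : y ≤ 2 * Q + 4 := by
    have h2 : y * (y + 2) ≤ y * (2 * Q + 6) := by nlinarith [hlow, htB]
    have h3 := Nat.le_of_mul_le_mul_left h2 (by omega : 0 < y)
    omega
  have hmem : d ∈ (((Finset.Icc 1 (2 * Q + 4)).biUnion fun y' =>
      ({y'} : Finset ℕ) ×ˢ Scong Q y' ε).image fun p => ((p.2 : ℤ) ^ 2 - ε).toNat / p.1 ^ 2) := by
    refine Finset.mem_image.mpr ⟨(y, t), ?_, ?_⟩
    · refine Finset.mem_biUnion.mpr ⟨y, Finset.mem_Icc.mpr ⟨hy, hyY⟩, ?_⟩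
      refine Finset.mem_product.mpr ⟨Finset.mem_singleton_self y, ?_⟩
      refine Finset.mem_filter.mpr ⟨Finset.mem_Ioc.mpr ⟨ht0, htB⟩, ?_⟩
      refine ⟨(d : ℤ), ?_⟩
      push_cast
      linarith [heq]
    · have e1 : ((t : ℤ) ^ 2 - ε) = ((d * y ^ 2 : ℕ) : ℤ) := by push_cast; linarith [heq]
      simp only [e1, Int.toNat_natCast]
      exact Nat.mul_div_cancel d (by positivity)
  exact Finset.mem_biUnion.mpr ⟨ε, hε, hmem⟩

lemma bigG_card_le (X : ℕ) :
    (bigG X).card ≤ 4 * ∑ y ∈ Finset.Icc 1 (2 * Nat.sqrt X + 4),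
      (y ^ 2).divisors.card * (8 * (y * (Nat.sqrt X + 3)) / y ^ 2 + 1) := by
  classical
  refine (Finset.card_biUnion_le).trans ?_
  have hcard : ∀ ε ∈ ({1, -1, 4, -4} : Finset ℤ),
      ((((Finset.Icc 1 (2 * Nat.sqrt X + 4)).biUnion fun y =>
          ({y} : Finset ℕ) ×ˢ Scong (Nat.sqrt X) y ε).image
        fun p => ((p.2 : ℤ) ^ 2 - ε).toNat / p.1 ^ 2)).card
      ≤ ∑ y ∈ Finset.Icc 1 (2 * Nat.sqrt X + 4),
          (y ^ 2).divisors.card * (8 * (y * (Nat.sqrt X + 3)) / y ^ 2 + 1) := by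
    intro ε hεE
    refine (Finset.card_image_le).trans ?_
    refine (Finset.card_biUnion_le).trans ?_
    apply Finset.sum_le_sum
    intro y hy
    have hy1 : 1 ≤ y := (Finset.mem_Icc.mp hy).1
    have hdvd4 : ε ∣ 4 := by
      fin_cases hεE
      · exact ⟨4, by norm_num⟩
      · exact ⟨-4, by norm_num⟩
      · exact ⟨1, by norm_num⟩
      · exact ⟨-1, by norm_num⟩
    have hcong := card_cong_le (y ^ 2) (y * (Nat.sqrt X + 3)) (by positivity) ε hdvd4
    calc (({y} : Finset ℕ) ×ˢ Scong (Nat.sqrt X) y ε).card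
        = (Scong (Nat.sqrt X) y ε).card := by
          rw [Finset.card_product, Finset.card_singleton, one_mul]
      _ ≤ _ := hcong
  calc ∑ ε ∈ ({1, -1, 4, -4} : Finset ℤ), ((((Finset.Icc 1 (2 * Nat.sqrt X + 4)).biUnion fun y =>
          ({y} : Finset ℕ) ×ˢ Scong (Nat.sqrt X) y ε).image
        fun p => ((p.2 : ℤ) ^ 2 - ε).toNat / p.1 ^ 2)).card
      ≤ ∑ _ε ∈ ({1, -1, 4, -4} : Finset ℤ), ∑ y ∈ Finset.Icc 1 (2 * Nat.sqrt X + 4),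
          (y ^ 2).divisors.card * (8 * (y * (Nat.sqrt X + 3)) / y ^ 2 + 1) :=
        Finset.sum_le_sum hcard
    _ = 4 * ∑ y ∈ Finset.Icc 1 (2 * Nat.sqrt X + 4),
          (y ^ 2).divisors.card * (8 * (y * (Nat.sqrt X + 3)) / y ^ 2 + 1) := by
        rw [Finset.sum_const, smul_eq_mul]
        norm_num

lemma nat_sqrt_le_real (X : ℕ) : ((Nat.sqrt X : ℕ) : ℝ) ≤ Real.sqrt X := by
  have hsq : ((Nat.sqrt X : ℕ) : ℝ) ^ 2 ≤ (X : ℝ) := by exact_mod_cast Nat.sqrt_le' X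
  have e : ((Nat.sqrt X : ℕ) : ℝ) = Real.sqrt (((Nat.sqrt X : ℕ) : ℝ) ^ 2) :=
    (Real.sqrt_sq (by positivity)).symm
  rw [e]
  exact Real.sqrt_le_sqrt hsq

set_option maxHeartbeats 1000000 in
lemma bigG_real_bound (X : ℕ) (hX : 1 ≤ X) :
    ((bigG X).card : ℝ) ≤ 12000 * (Real.sqrt X * Real.sqrt (Real.sqrt X)) * (1 + Real.log X) := by
  classical
  set Q := Nat.sqrt X with hQ
  set n := 2 * Q + 4 with hn
  set s := Real.sqrt X with hs
  set r := Real.sqrt s with hr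
  have hs1 : 1 ≤ s := by
    rw [hs, show (1 : ℝ) = Real.sqrt 1 by simp]
    exact Real.sqrt_le_sqrt (by exact_mod_cast hX)
  have hr1 : 1 ≤ r := by
    rw [hr, show (1 : ℝ) = Real.sqrt 1 by simp]
    exact Real.sqrt_le_sqrt hs1
  have hQs : ((Q : ℕ) : ℝ) ≤ s := nat_sqrt_le_real X
  have hns : ((n : ℕ) : ℝ) ≤ 6 * s := by
    push_cast [hn]
    linarith
  have hsn : Real.sqrt n ≤ 3 * r := by
    have h1 : Real.sqrt ((n : ℕ) : ℝ) ≤ Real.sqrt (6 * s) := Real.sqrt_le_sqrt hns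
    have h2 : Real.sqrt (6 * s) = Real.sqrt 6 * r := by
      rw [hr, Real.sqrt_mul (by norm_num : (0:ℝ) ≤ 6)]
    have h3 : Real.sqrt 6 ≤ 3 := by
      rw [show (3 : ℝ) = Real.sqrt 9 by
        rw [show (9 : ℝ) = 3 ^ 2 by norm_num, Real.sqrt_sq (by norm_num)]]
      exact Real.sqrt_le_sqrt (by norm_num)
    calc Real.sqrt ((n : ℕ) : ℝ) ≤ Real.sqrt 6 * r := by rw [← h2]; exact h1
      _ ≤ 3 * r := by nlinarith [h3, hr1]
  have hlogX0 : 0 ≤ Real.log X := log_nat_nonneg X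
  have hLn : 1 + Real.log n ≤ 6 * (1 + Real.log X) := by
    have hn0 : (0 : ℝ) < ((n : ℕ) : ℝ) := by positivity
    have h1 : Real.log n ≤ Real.log (6 * s) := Real.log_le_log hn0 hns
    have h2 : Real.log (6 * s) = Real.log 6 + Real.log s := by
      rw [Real.log_mul (by norm_num) (by positivity)]
    have h3 : Real.log 6 ≤ 5 := by linarith [Real.log_le_sub_one_of_pos (by norm_num : (0:ℝ) < 6)]
    have h4 : Real.log s ≤ Real.log X := by
      apply Real.log_le_log (by positivity)
      rw [hs]
      have hX1 : (1 : ℝ) ≤ (X : ℝ) := by exact_mod_cast hX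
      calc Real.sqrt X ≤ Real.sqrt ((X : ℝ) ^ 2) := Real.sqrt_le_sqrt (by nlinarith)
        _ = (X : ℝ) := Real.sqrt_sq (by positivity)
    linarith
  -- cast the nat bound
  have h1 := bigG_card_le X
  have h2 : ((bigG X).card : ℝ) ≤ 4 * ∑ y ∈ Finset.Icc 1 n,
      ((y ^ 2).divisors.card : ℝ) * (((8 * (y * (Q + 3)) / y ^ 2 + 1 : ℕ)) : ℝ) := by
    rw [hn, hQ]
    exact_mod_cast h1
  have h3 : ∀ y ∈ Finset.Icc 1 n, ((y ^ 2).divisors.card : ℝ) * (((8 * (y * (Q + 3)) / y ^ 2 + 1 : ℕ)) : ℝ)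
      ≤ (16 * ((Q : ℝ) + 3)) * ((y.divisors.card : ℝ) * (1 / Real.sqrt y))
        + 2 * ((y.divisors.card : ℝ) * Real.sqrt y) := by
    intro y hy
    have hy1 : 1 ≤ y := (Finset.mem_Icc.mp hy).1
    have hy0 : (0 : ℝ) < (y : ℝ) := by exact_mod_cast hy1
    have hsy0 : 0 < Real.sqrt y := Real.sqrt_pos.mpr hy0
    have hsy : Real.sqrt y * Real.sqrt y = (y : ℝ) := Real.mul_self_sqrt hy0.le
    have hnd : (((8 * (y * (Q + 3)) / y ^ 2 + 1 : ℕ)) : ℝ) ≤ 8 * ((Q : ℝ) + 3) / y + 1 := by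
      have hc : (((8 * (y * (Q + 3)) / y ^ 2 : ℕ)) : ℝ) ≤ ((8 * (y * (Q + 3)) : ℕ) : ℝ) / ((y ^ 2 : ℕ) : ℝ) :=
        Nat.cast_div_le
      have he : ((8 * (y * (Q + 3)) : ℕ) : ℝ) / ((y ^ 2 : ℕ) : ℝ) = 8 * ((Q : ℝ) + 3) / y := by
        push_cast
        field_simp
        try ring
      rw [he] at hc
      push_cast
      linarith
    have htau2 : ((y ^ 2).divisors.card : ℝ) ≤ 2 * Real.sqrt y * (y.divisors.card : ℝ) := by
      have ha : ((y ^ 2).divisors.card : ℝ) ≤ ((y.divisors.card : ℝ)) ^ 2 := by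
        exact_mod_cast card_divisors_sq_le y
      have hb := tau_real_le y
      nlinarith [Nat.cast_nonneg (α := ℝ) y.divisors.card]
    have htau0 : (0 : ℝ) ≤ (y.divisors.card : ℝ) := by positivity
    have hrhs0 : (0 : ℝ) ≤ 8 * ((Q : ℝ) + 3) / y + 1 := by positivity
    calc ((y ^ 2).divisors.card : ℝ) * (((8 * (y * (Q + 3)) / y ^ 2 + 1 : ℕ)) : ℝ)
        ≤ (2 * Real.sqrt y * (y.divisors.card : ℝ)) * (8 * ((Q : ℝ) + 3) / y + 1) := by
          apply mul_le_mul htau2 hnd (by positivity) (by positivity)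
      _ = (16 * ((Q : ℝ) + 3)) * ((y.divisors.card : ℝ) * (Real.sqrt y / y))
          + 2 * ((y.divisors.card : ℝ) * Real.sqrt y) := by ring
      _ = (16 * ((Q : ℝ) + 3)) * ((y.divisors.card : ℝ) * (1 / Real.sqrt y))
          + 2 * ((y.divisors.card : ℝ) * Real.sqrt y) := by
          have hfrac : Real.sqrt y / (y : ℝ) = 1 / Real.sqrt y := by
            field_simp
            try linarith [hsy]
          rw [hfrac]
  have h4 : ∑ y ∈ Finset.Icc 1 n, ((y ^ 2).divisors.card : ℝ) * (((8 * (y * (Q + 3)) / y ^ 2 + 1 : ℕ)) : ℝ)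
      ≤ (16 * ((Q : ℝ) + 3)) * (∑ y ∈ Finset.Icc 1 n, (y.divisors.card : ℝ) * (1 / Real.sqrt y))
        + 2 * (∑ y ∈ Finset.Icc 1 n, (y.divisors.card : ℝ) * Real.sqrt y) := by
    rw [Finset.mul_sum, Finset.mul_sum, ← Finset.sum_add_distrib]
    exact Finset.sum_le_sum h3
  set A := ∑ y ∈ Finset.Icc 1 n, (y.divisors.card : ℝ) * (1 / Real.sqrt y) with hA
  set B := ∑ y ∈ Finset.Icc 1 n, (y.divisors.card : ℝ) * Real.sqrt y with hB
  have hA0 : 0 ≤ A := by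
    rw [hA]
    apply Finset.sum_nonneg
    intro y hy
    positivity
  have hAle : A ≤ 36 * (r * (1 + Real.log X)) := by
    have := sum_tau_div_sqrt_le n
    calc A ≤ 2 * Real.sqrt n * (1 + Real.log n) := this
      _ ≤ 2 * (3 * r) * (6 * (1 + Real.log X)) := by
          apply mul_le_mul (by nlinarith [hsn, Real.sqrt_nonneg ((n:ℕ):ℝ)]) hLn
            (by linarith [log_nat_nonneg n]) (by positivity)
      _ = 36 * (r * (1 + Real.log X)) := by ring
  have hBle : B ≤ 108 * (r * (s * (1 + Real.log X))) := by
    have := sum_sqrt_tau_le n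
    calc B ≤ Real.sqrt n * ((n : ℝ) * (1 + Real.log n)) := this
      _ ≤ (3 * r) * ((6 * s) * (6 * (1 + Real.log X))) := by
          apply mul_le_mul hsn
          · apply mul_le_mul hns hLn (by linarith [log_nat_nonneg n]) (by positivity)
          · positivity
          · positivity
      _ = 108 * (r * (s * (1 + Real.log X))) := by ring
  have hQ4 : (Q : ℝ) + 3 ≤ 4 * s := by linarith
  have key1 : ((Q : ℝ) + 3) * A ≤ (4 * s) * (36 * (r * (1 + Real.log X))) :=
    mul_le_mul hQ4 hAle hA0 (by positivity)
  have hsrL : 0 ≤ s * r * (1 + Real.log X) := by positivity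
  calc ((bigG X).card : ℝ)
      ≤ 4 * ((16 * ((Q : ℝ) + 3)) * A + 2 * B) := by linarith [h2, h4]
    _ ≤ 12000 * (s * r) * (1 + Real.log X) := by nlinarith [key1, hBle, hsrL]
  -- done

lemma two_ytilde (y : ℕ) : y ≤ 2 * ytilde y := by
  unfold ytilde
  split
  · rename_i h
    obtain ⟨k, rfl⟩ := h
    omega
  · omega

lemma T0_mem_bigG {X d : ℕ} (hdX : d ≤ X) (hd : d ∈ T0) : d ∈ bigG X := by
  obtain ⟨hd0, -, y, x, a, hy, hxy, -, ha, habs⟩ := hd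
  set N := a * y + x with hN
  have hyt := two_ytilde y
  have haN : (ytilde y + 1) * y ≤ N := by
    have h0 : ytilde y + 1 ≤ a := ha
    calc (ytilde y + 1) * y ≤ a * y := Nat.mul_le_mul_right y h0
      _ ≤ N := by omega
  have h1 : (y + 2) * y ≤ (2 * ytilde y + 2) * y := Nat.mul_le_mul_right y (by omega)
  have hlow : y ^ 2 + 2 * y ≤ 2 * N := by nlinarith [h1, haN]
  have ht0 : 0 < N := by
    have h2 : 1 ≤ (ytilde y + 1) * y := Nat.mul_pos (by omega) (by omega)
    omega
  rcases (abs_eq (by norm_num : (0:ℤ) ≤ 1)).mp habs with h | h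
  · exact mem_bigG (ε := 1) (by simp) hy ht0 hlow (by push_cast; linarith [h]) hdX
  · exact mem_bigG (ε := -1) (by simp) hy ht0 hlow (by push_cast; linarith [h]) hdX

lemma T1_mem_bigG {X d : ℕ} (hdX : d ≤ X) (hd : d ∈ T1) : d ∈ bigG X := by
  obtain ⟨hd0, -, -, y, x, a, hy, hxy, -, ha, habs⟩ := hd
  set N := a * y + x with hN
  have hyt := two_ytilde y
  have haN : (ytilde y + 1) * y ≤ N := by
    have h0 : ytilde y + 1 ≤ a := ha
    calc (ytilde y + 1) * y ≤ a * y := Nat.mul_le_mul_right y h0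
      _ ≤ N := by omega
  have h1 : (y + 2) * y ≤ (2 * ytilde y + 2) * y := Nat.mul_le_mul_right y (by omega)
  have h2N : y ^ 2 + 2 * y ≤ 2 * N := by nlinarith [h1, haN]
  have hyN : y ≤ N := by
    have h2 : y * 1 ≤ (ytilde y + 1) * y := by nlinarith [hy]
    omega
  set t := 2 * N - y with htdef
  have htsub : t + y = 2 * N := by omega
  have htZ : (t : ℤ) = 2 * (N : ℤ) - (y : ℤ) := by
    have hc : ((t + y : ℕ) : ℤ) = ((2 * N : ℕ) : ℤ) := by rw [htsub]
    push_cast at hc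
    linarith
  have hlow : y ^ 2 + 2 * y ≤ 2 * t := by nlinarith [h2N, htsub]
  have ht0 : 0 < t := by omega
  have habs' : |(t : ℤ) ^ 2 - (d : ℤ) * (y : ℤ) ^ 2| = 4 := by
    rw [htZ]
    exact habs
  rcases (abs_eq (by norm_num : (0:ℤ) ≤ 4)).mp habs' with h | h
  · exact mem_bigG (ε := 4) (by simp) hy ht0 hlow (by linarith [h]) hdX
  · exact mem_bigG (ε := -4) (by simp) hy ht0 hlow (by linarith [h]) hdX


lemma den0_lb (X : ℕ) (hX : 1024 ≤ X) :
    (X : ℝ) / 32 ≤ (({d : ℕ | d ≤ X ∧ Squarefree d}).ncard : ℝ) := by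
  classical
  set F := (Finset.Icc 1 X).filter (fun d => Squarefree d) with hF
  have hsub : (↑F : Set ℕ) ⊆ {d : ℕ | d ≤ X ∧ Squarefree d} := by
    intro d hd
    simp only [hF, Finset.coe_filter, Set.mem_setOf_eq, Finset.mem_Icc] at hd
    exact ⟨hd.1.2, hd.2⟩
  have hfin : ({d : ℕ | d ≤ X ∧ Squarefree d}).Finite :=
    (Set.finite_Iic X).subset (fun d hd => hd.1)
  have hcard : F.card ≤ ({d : ℕ | d ≤ X ∧ Squarefree d}).ncard := by
    have h0 := Set.ncard_le_ncard hsub hfin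
    rwa [Set.ncard_coe_finset] at h0
  set Q := Nat.sqrt X with hQ
  have hcover : (Finset.Icc 1 X).filter (fun d => ¬ Squarefree d) ⊆
      (Finset.Icc 2 Q).biUnion (fun k => (Finset.Icc 1 X).filter (fun d => k ^ 2 ∣ d)) := by
    intro d hd
    obtain ⟨hd1, hnsf⟩ := Finset.mem_filter.mp hd
    obtain ⟨hd1', hdX⟩ := Finset.mem_Icc.mp hd1
    have h2 : ¬ ∀ p, Nat.Prime p → ¬ p * p ∣ d := by
      rw [← Nat.squarefree_iff_prime_squarefree]; exact hnsf
    push_neg at h2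
    obtain ⟨p, hp, hpd⟩ := h2
    refine Finset.mem_biUnion.mpr ⟨p, ?_, Finset.mem_filter.mpr ⟨hd1, by rwa [pow_two]⟩⟩
    refine Finset.mem_Icc.mpr ⟨hp.two_le, ?_⟩
    exact Nat.le_sqrt.mpr (le_trans (Nat.le_of_dvd (by omega) hpd) hdX)
  have hcount : ((Finset.Icc 1 X).filter (fun d => ¬ Squarefree d)).card
      ≤ ∑ k ∈ Finset.Icc 2 Q, X / k ^ 2 := by
    refine le_trans (Finset.card_le_card hcover) ?_
    refine (Finset.card_biUnion_le).trans ?_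
    apply Finset.sum_le_sum
    intro k hk
    have hk2 : 2 ≤ k := (Finset.mem_Icc.mp hk).1
    exact card_multiples_le X (k ^ 2) (by positivity)
  have hsum : ((∑ k ∈ Finset.Icc 2 Q, X / k ^ 2 : ℕ) : ℝ) ≤ 3 / 4 * (X : ℝ) := by
    calc ((∑ k ∈ Finset.Icc 2 Q, X / k ^ 2 : ℕ) : ℝ)
        = ∑ k ∈ Finset.Icc 2 Q, ((X / k ^ 2 : ℕ) : ℝ) := by push_cast; rfl
      _ ≤ ∑ k ∈ Finset.Icc 2 Q, (X : ℝ) * (1 / (k : ℝ) ^ 2) := by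
          apply Finset.sum_le_sum
          intro k hk
          have hk2 : 2 ≤ k := (Finset.mem_Icc.mp hk).1
          calc ((X / k ^ 2 : ℕ) : ℝ) ≤ (X : ℝ) / ((k ^ 2 : ℕ) : ℝ) := Nat.cast_div_le
            _ = (X : ℝ) * (1 / (k : ℝ) ^ 2) := by push_cast; ring
      _ = (X : ℝ) * ∑ k ∈ Finset.Icc 2 Q, (1 / (k : ℝ) ^ 2) := by rw [← Finset.mul_sum]
      _ ≤ (X : ℝ) * (3 / 4) := by
          apply mul_le_mul_of_nonneg_left (sum_inv_sq_le Q) (by positivity)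
      _ = 3 / 4 * (X : ℝ) := by ring
  have hsplit : F.card + ((Finset.Icc 1 X).filter (fun d => ¬ Squarefree d)).card = X := by
    rw [hF, Finset.card_filter_add_card_filter_not]
    simp [Nat.card_Icc]
  have hcast : (F.card : ℝ) + (((Finset.Icc 1 X).filter (fun d => ¬ Squarefree d)).card : ℝ)
      = (X : ℝ) := by exact_mod_cast hsplit
  have hc2 : (((Finset.Icc 1 X).filter (fun d => ¬ Squarefree d)).card : ℝ) ≤ 3 / 4 * (X : ℝ) :=
    le_trans (by exact_mod_cast hcount) hsum
  have hXR : (0 : ℝ) ≤ (X : ℝ) := by positivity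
  calc (X : ℝ) / 32 ≤ (X : ℝ) - 3 / 4 * (X : ℝ) := by linarith
    _ ≤ (F.card : ℝ) := by linarith
    _ ≤ _ := by exact_mod_cast hcard

lemma den1_lb (X : ℕ) (hX : 1024 ≤ X) :
    (X : ℝ) / 32 ≤ (({d : ℕ | d ≤ X ∧ Squarefree d ∧ d % 4 = 1}).ncard : ℝ) := by
  classical
  set A := (Finset.Icc 1 X).filter (fun d => d % 4 = 1) with hA
  set F := A.filter (fun d => Squarefree d) with hF
  have hsub : (↑F : Set ℕ) ⊆ {d : ℕ | d ≤ X ∧ Squarefree d ∧ d % 4 = 1} := by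
    intro d hd
    simp only [hF, hA, Finset.coe_filter, Set.mem_setOf_eq, Finset.mem_filter,
      Finset.mem_Icc] at hd
    exact ⟨hd.1.1.2, hd.2, hd.1.2⟩
  have hfin : ({d : ℕ | d ≤ X ∧ Squarefree d ∧ d % 4 = 1}).Finite :=
    (Set.finite_Iic X).subset (fun d hd => hd.1)
  have hcard : F.card ≤ ({d : ℕ | d ≤ X ∧ Squarefree d ∧ d % 4 = 1}).ncard := by
    have h0 := Set.ncard_le_ncard hsub hfin
    rwa [Set.ncard_coe_finset] at h0
  set Q := Nat.sqrt X with hQ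
  have hAcard : X / 4 ≤ A.card := by
    have himg : (Finset.range (X / 4)).image (fun j => 4 * j + 1) ⊆ A := by
      intro d hd
      obtain ⟨j, hj, rfl⟩ := Finset.mem_image.mp hd
      have hjX : j < X / 4 := Finset.mem_range.mp hj
      have hd4 := Nat.div_mul_le_self X 4
      refine Finset.mem_filter.mpr ⟨Finset.mem_Icc.mpr ⟨by omega, by omega⟩, by omega⟩
    calc X / 4 = ((Finset.range (X / 4)).image (fun j => 4 * j + 1)).card := by
          rw [Finset.card_image_of_injective _ (fun a b hab => by omega), Finset.card_range]
      _ ≤ A.card := Finset.card_le_card himg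
  have hcover : A.filter (fun d => ¬ Squarefree d) ⊆
      (Finset.Icc 3 Q).biUnion (fun k => A.filter (fun d => k ^ 2 ∣ d)) := by
    intro d hd
    obtain ⟨hdA, hnsf⟩ := Finset.mem_filter.mp hd
    obtain ⟨hd1, hmod⟩ := Finset.mem_filter.mp hdA
    obtain ⟨hd1', hdX⟩ := Finset.mem_Icc.mp hd1
    have h2 : ¬ ∀ p, Nat.Prime p → ¬ p * p ∣ d := by
      rw [← Nat.squarefree_iff_prime_squarefree]; exact hnsf
    push_neg at h2
    obtain ⟨p, hp, hpd⟩ := h2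
    have hp2 : 2 ≤ p := hp.two_le
    have hpne2 : p ≠ 2 := by
      rintro rfl
      have h4 : (4 : ℕ) ∣ d := by
        have : (4 : ℕ) = 2 * 2 := by norm_num
        rw [this]; exact hpd
      omega
    refine Finset.mem_biUnion.mpr ⟨p, Finset.mem_Icc.mpr ⟨by omega,
      Nat.le_sqrt.mpr (le_trans (Nat.le_of_dvd (by omega) hpd) hdX)⟩,
      Finset.mem_filter.mpr ⟨hdA, by rwa [pow_two]⟩⟩
  have hinner : ∀ k ∈ Finset.Icc 3 Q,
      (A.filter (fun d => k ^ 2 ∣ d)).card ≤ X / (4 * k ^ 2) + 1 := by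
    intro k hk
    have hk3 : 3 ≤ k := (Finset.mem_Icc.mp hk).1
    by_cases hkev : k % 2 = 0
    · have hempty : A.filter (fun d => k ^ 2 ∣ d) = ∅ := by
        apply Finset.eq_empty_of_forall_notMem
        intro d hd
        obtain ⟨hdA, hkd⟩ := Finset.mem_filter.mp hd
        obtain ⟨-, hmod⟩ := Finset.mem_filter.mp hdA
        obtain ⟨j, rfl⟩ : ∃ j, k = 2 * j := ⟨k / 2, by omega⟩
        have h4 : (4 : ℕ) ∣ d := dvd_trans ⟨j ^ 2, by ring⟩ hkd
        omega
      rw [hempty]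
      simp
    · apply spacing_card (L := 4 * k ^ 2) (by positivity)
      · intro d hd
        obtain ⟨hdA, -⟩ := Finset.mem_filter.mp hd
        obtain ⟨hd1, -⟩ := Finset.mem_filter.mp hdA
        obtain ⟨h1, h2⟩ := Finset.mem_Icc.mp hd1
        exact Finset.mem_Ioc.mpr ⟨by omega, h2⟩
      · intro a ha b hb
        obtain ⟨haA, hka⟩ := Finset.mem_filter.mp ha
        obtain ⟨-, hamod⟩ := Finset.mem_filter.mp haA
        obtain ⟨hbA, hkb⟩ := Finset.mem_filter.mp hb
        obtain ⟨-, hbmod⟩ := Finset.mem_filter.mp hbA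
        have h4ab : (4 : ℤ) ∣ (a : ℤ) - (b : ℤ) := by omega
        have hk2ab : ((k : ℤ) ^ 2) ∣ (a : ℤ) - (b : ℤ) := by
          have hca : ((k ^ 2 : ℕ) : ℤ) ∣ (a : ℤ) := Int.natCast_dvd_natCast.mpr hka
          have hcb : ((k ^ 2 : ℕ) : ℤ) ∣ (b : ℤ) := Int.natCast_dvd_natCast.mpr hkb
          push_cast at hca hcb
          exact dvd_sub hca hcb
        have hcop : IsCoprime (4 : ℤ) ((k : ℤ) ^ 2) := by
          have h2k : Nat.Coprime 2 k := (Nat.prime_two.coprime_iff_not_dvd).mpr (by omega)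
          have h4k : Nat.Coprime 4 (k ^ 2) := by
            have := Nat.Coprime.pow (n := 2) (m := 2) h2k
            simpa [show (4:ℕ) = 2 ^ 2 by norm_num] using this
          have := Nat.isCoprime_iff_coprime.mpr h4k
          push_cast at this
          exact this
        have hmul := hcop.mul_dvd h4ab hk2ab
        have e : ((4 * k ^ 2 : ℕ) : ℤ) = 4 * (k : ℤ) ^ 2 := by push_cast; ring
        rw [e]
        exact hmul
  have hcount : (A.filter (fun d => ¬ Squarefree d)).card
      ≤ ∑ k ∈ Finset.Icc 3 Q, (X / (4 * k ^ 2) + 1) :=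
    le_trans (Finset.card_le_card hcover) ((Finset.card_biUnion_le).trans (Finset.sum_le_sum hinner))
  have hQX : ((Q : ℕ) : ℝ) ≤ Real.sqrt X := nat_sqrt_le_real X
  have hsum : ((∑ k ∈ Finset.Icc 3 Q, (X / (4 * k ^ 2) + 1) : ℕ) : ℝ)
      ≤ (X : ℝ) / 8 + Real.sqrt X := by
    calc ((∑ k ∈ Finset.Icc 3 Q, (X / (4 * k ^ 2) + 1) : ℕ) : ℝ)
        = ∑ k ∈ Finset.Icc 3 Q, (((X / (4 * k ^ 2) : ℕ) : ℝ) + 1) := by push_cast; rfl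
      _ ≤ ∑ k ∈ Finset.Icc 3 Q, ((X : ℝ) / 4 * (1 / (k : ℝ) ^ 2) + 1) := by
          apply Finset.sum_le_sum
          intro k hk
          have hk3 : 3 ≤ k := (Finset.mem_Icc.mp hk).1
          have hc : ((X / (4 * k ^ 2) : ℕ) : ℝ) ≤ (X : ℝ) / ((4 * k ^ 2 : ℕ) : ℝ) :=
            Nat.cast_div_le
          have he : (X : ℝ) / ((4 * k ^ 2 : ℕ) : ℝ) = (X : ℝ) / 4 * (1 / (k : ℝ) ^ 2) := by
            push_cast
            have hk0 : (0:ℝ) < (k:ℝ) := by exact_mod_cast (by omega : 0 < k)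
            field_simp
          linarith [hc, he ▸ hc]
      _ = (X : ℝ) / 4 * (∑ k ∈ Finset.Icc 3 Q, (1 / (k : ℝ) ^ 2)) + (Finset.Icc 3 Q).card := by
          rw [Finset.sum_add_distrib, ← Finset.mul_sum, Finset.sum_const, nsmul_eq_mul, mul_one]
      _ ≤ (X : ℝ) / 4 * (1 / 2) + Real.sqrt X := by
          have h1 := sum_inv_sq_ge3_le Q
          have h2 : ((Finset.Icc 3 Q).card : ℝ) ≤ ((Q : ℕ) : ℝ) := by
            have : (Finset.Icc 3 Q).card ≤ Q := by
              rw [Nat.card_Icc]; omega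
            exact_mod_cast this
          have hX4 : (0:ℝ) ≤ (X:ℝ)/4 := by positivity
          nlinarith [hQX]
      _ = (X : ℝ) / 8 + Real.sqrt X := by ring
  have hsplit : F.card + (A.filter (fun d => ¬ Squarefree d)).card = A.card := by
    rw [hF, Finset.card_filter_add_card_filter_not]
  have hcast : (F.card : ℝ) + ((A.filter (fun d => ¬ Squarefree d)).card : ℝ) = (A.card : ℝ) := by
    exact_mod_cast hsplit
  have hc2 : ((A.filter (fun d => ¬ Squarefree d)).card : ℝ) ≤ (X : ℝ) / 8 + Real.sqrt X :=
    le_trans (by exact_mod_cast hcount) hsum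
  have hAreal : (X : ℝ) / 4 - 1 ≤ (A.card : ℝ) := by
    have h1 : 4 * (X / 4) + 3 ≥ X := by omega
    have h2 : ((X / 4 : ℕ) : ℝ) ≥ ((X : ℝ) - 3) / 4 := by
      have : ((4 * (X / 4) + 3 : ℕ) : ℝ) ≥ (X : ℝ) := by exact_mod_cast h1
      push_cast at this
      linarith
    have h3 : ((X / 4 : ℕ) : ℝ) ≤ (A.card : ℝ) := by exact_mod_cast hAcard
    linarith
  have hsX : Real.sqrt X ≤ (X : ℝ) / 32 := by
    have hss : Real.sqrt (X:ℝ) * Real.sqrt (X:ℝ) = (X : ℝ) := Real.mul_self_sqrt (by positivity)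
    have h32 : (32 : ℝ) ≤ Real.sqrt X := by
      have : ((1024 : ℕ) : ℝ) ≤ (X : ℝ) := by exact_mod_cast hX
      have h1024 : Real.sqrt 1024 ≤ Real.sqrt X := Real.sqrt_le_sqrt (by exact_mod_cast this)
      have : Real.sqrt (1024 : ℝ) = 32 := by
        rw [show (1024 : ℝ) = 32 ^ 2 by norm_num, Real.sqrt_sq (by norm_num)]
      linarith
    nlinarith [Real.sqrt_nonneg (X:ℝ)]
  have hX1024 : (1024 : ℝ) ≤ (X : ℝ) := by exact_mod_cast hX
  calc (X : ℝ) / 32 ≤ (X : ℝ) / 4 - 1 - ((X : ℝ) / 8 + Real.sqrt X) := by linarith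
    _ ≤ (F.card : ℝ) := by linarith
    _ ≤ _ := by exact_mod_cast hcard

lemma tendsto_aux :
    Filter.Tendsto (fun X : ℕ => 384000 * (1 + Real.log X) / Real.sqrt (Real.sqrt X))
      Filter.atTop (nhds 0) := by
  have h1 : Filter.Tendsto (fun x : ℝ => 384000 * (1 + Real.log x) / x ^ ((1:ℝ)/4))
      Filter.atTop (nhds 0) := by
    have hlog : Filter.Tendsto (fun x : ℝ => Real.log x / x ^ ((1:ℝ)/4)) Filter.atTop (nhds 0) :=
      (isLittleO_log_rpow_atTop (by norm_num)).tendsto_div_nhds_zero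
    have hinv : Filter.Tendsto (fun x : ℝ => x ^ (-((1:ℝ)/4))) Filter.atTop (nhds 0) :=
      tendsto_rpow_neg_atTop (by norm_num)
    have hsum := (hinv.add hlog).const_mul (384000 : ℝ)
    rw [add_zero, mul_zero] at hsum
    apply hsum.congr'
    filter_upwards [Filter.eventually_ge_atTop (1:ℝ)] with x hx
    have hx0 : (0:ℝ) < x := by linarith
    have hrp : (0:ℝ) < x ^ ((1:ℝ)/4) := Real.rpow_pos_of_pos hx0 _
    rw [Real.rpow_neg hx0.le]
    field_simp
    try ring
  have h2 := h1.comp (tendsto_natCast_atTop_atTop (R := ℝ))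
  apply h2.congr'
  filter_upwards [Filter.eventually_ge_atTop 1] with X hX
  have hX0 : (0:ℝ) ≤ (X : ℝ) := by positivity
  have hssr : Real.sqrt (Real.sqrt (X:ℝ)) = (X:ℝ) ^ ((1:ℝ)/4) := by
    rw [Real.sqrt_eq_rpow, Real.sqrt_eq_rpow, ← Real.rpow_mul hX0]
    norm_num
  simp only [Function.comp]
  try rw [hssr]

lemma ratio_tendsto (num den : ℕ → ℕ)
    (hnum : ∀ X : ℕ, 1024 ≤ X → (num X : ℝ)
      ≤ 12000 * (Real.sqrt X * Real.sqrt (Real.sqrt X)) * (1 + Real.log X))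
    (hden : ∀ X : ℕ, 1024 ≤ X → (X : ℝ) / 32 ≤ (den X : ℝ)) :
    Filter.Tendsto (fun X : ℕ => (num X : ℝ) / (den X : ℝ)) Filter.atTop (nhds 0) := by
  apply squeeze_zero' (g := fun X : ℕ => 384000 * (1 + Real.log X) / Real.sqrt (Real.sqrt X))
  · filter_upwards with X
    positivity
  · filter_upwards [Filter.eventually_ge_atTop 1024] with X hX
    set s := Real.sqrt (X:ℝ) with hsdef
    set r := Real.sqrt s with hrdef
    have hX1024 : (1024:ℝ) ≤ (X:ℝ) := by exact_mod_cast hX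
    have hss : s * s = (X:ℝ) := Real.mul_self_sqrt (by positivity)
    have hs0 : 0 < s := Real.sqrt_pos.mpr (by linarith)
    have hrr : r * r = s := Real.mul_self_sqrt (by positivity)
    have hr0 : 0 < r := Real.sqrt_pos.mpr hs0
    have hL0 : 0 ≤ 1 + Real.log X := by linarith [log_nat_nonneg X]
    have hX320 : (0:ℝ) < (X:ℝ)/32 := by linarith
    have hd := hden X hX
    have hn := hnum X hX
    calc (num X : ℝ) / (den X : ℝ)
        ≤ (12000 * (s * r) * (1 + Real.log X)) / ((X:ℝ)/32) := by
          apply div_le_div₀ (by positivity) hn hX320 hd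
      _ = 384000 * (1 + Real.log X) / r := by
          rw [← hss, ← hrr]
          field_simp
          ring
  · exact tendsto_aux

/-- among squarefree integers, the members of `T⁰` have relative density `0`,
and among squarefree integers `≡ 1 (mod 4)`, the members of `T¹` have relative density `0`;
i.e. almost all real quadratic fields are of the least type. -/
theorem stmt_19 :
    Filter.Tendsto
      (fun X : ℕ =>
        ({d : ℕ | d ≤ X ∧ Squarefree d ∧ d ∈ T0}.ncard : ℝ) /
          ({d : ℕ | d ≤ X ∧ Squarefree d}.ncard : ℝ))
      Filter.atTop (nhds 0) ∧
    Filter.Tendsto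
      (fun X : ℕ =>
        ({d : ℕ | d ≤ X ∧ Squarefree d ∧ d % 4 = 1 ∧ d ∈ T1}.ncard : ℝ) /
          ({d : ℕ | d ≤ X ∧ Squarefree d ∧ d % 4 = 1}.ncard : ℝ))
      Filter.atTop (nhds 0) := by
  refine ⟨ratio_tendsto (fun X => ({d : ℕ | d ≤ X ∧ Squarefree d ∧ d ∈ T0}).ncard)
      (fun X => ({d : ℕ | d ≤ X ∧ Squarefree d}).ncard) ?_ ?_,
    ratio_tendsto (fun X => ({d : ℕ | d ≤ X ∧ Squarefree d ∧ d % 4 = 1 ∧ d ∈ T1}).ncard)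
      (fun X => ({d : ℕ | d ≤ X ∧ Squarefree d ∧ d % 4 = 1}).ncard) ?_ ?_⟩
  · intro X hX
    have hsub : {d : ℕ | d ≤ X ∧ Squarefree d ∧ d ∈ T0} ⊆ (↑(bigG X) : Set ℕ) := by
      rintro d ⟨hdX, -, hdT⟩
      exact T0_mem_bigG hdX hdT
    have h1 : ({d : ℕ | d ≤ X ∧ Squarefree d ∧ d ∈ T0}).ncard ≤ (bigG X).card := by
      have h0 := Set.ncard_le_ncard hsub (bigG X).finite_toSet
      rwa [Set.ncard_coe_finset] at h0
    exact le_trans (by exact_mod_cast h1) (bigG_real_bound X (by omega))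
  · intro X hX
    exact den0_lb X hX
  · intro X hX
    have hsub : {d : ℕ | d ≤ X ∧ Squarefree d ∧ d % 4 = 1 ∧ d ∈ T1} ⊆ (↑(bigG X) : Set ℕ) := by
      rintro d ⟨hdX, -, -, hdT⟩
      exact T1_mem_bigG hdX hdT
    have h1 : ({d : ℕ | d ≤ X ∧ Squarefree d ∧ d % 4 = 1 ∧ d ∈ T1}).ncard ≤ (bigG X).card := by
      have h0 := Set.ncard_le_ncard hsub (bigG X).finite_toSet
      rwa [Set.ncard_coe_finset] at h0
    exact le_trans (by exact_mod_cast h1) (bigG_real_bound X (by omega))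
  · intro X hX
    exact den1_lb X hX
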